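/- Let d ≥ 2, i ∈ ℤ^d and a > 0. If ζ, ζ' : ℤ^d → ℕ satisfy ζ(j) = ζ'(j) for every j ∈ ℤ^d with ρ(K_j^1, K_i^1) ≤ β_d·a, then R_i(ζ) ≤ a if and only if R_i(ζ') ≤ a. (That is, whether the event {R_i ≤ a} occurs is determined by the configuration inside B_i(β_d·a).) -/

import Mathlib

open MeasureTheory
open scoped ENNReal NNReal

noncomputable section

/-- The level-`m` cube `K_i^m` in `ℝ^d`:
`K_i^m = {x : |x^(l) - m·i^(l)| ≤ m/2 for all l}`. -/
def cube (d : ℕ) (m : ℝ) (i : Fin d → ℤ) : Set (EuclideanSpace ℝ (Fin d)) :=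
  {x | ∀ l, |x l - m * (i l : ℝ)| ≤ m / 2}

/-- The distance `ρ(A,B) = inf {|x - y| : x ∈ A, y ∈ B}` between two sets. -/
def rho (d : ℕ) (A B : Set (EuclideanSpace ℝ (Fin d))) : ℝ :=
  sInf (Set.image2 dist A B)

/-- The discrete ball `B_i(r)`: the union of the level-1 cubes `K_j^1` with
`ρ(K_i^1, K_j^1) ≤ r` (and `B_i(0) = ∅`). -/
def dball (d : ℕ) (i : Fin d → ℤ) (r : ℝ) : Set (EuclideanSpace ℝ (Fin d)) :=
  if 0 < r then
    ⋃ j ∈ {j : Fin d → ℤ | rho d (cube d 1 i) (cube d 1 j) ≤ r}, cube d 1 j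
  else ∅

/-- `π_d`, the Lebesgue volume of the unit Euclidean ball in `ℝ^d`. -/
def unitBallVol (d : ℕ) : ℝ :=
  (volume (Metric.ball (0 : EuclideanSpace ℝ (Fin d)) 1)).toReal

/-- `β_d = ⌈3 + 2√d · π_d^(1/d)⌉`. -/
def betaD (d : ℕ) : ℝ :=
  (⌈3 + 2 * Real.sqrt d * (unitBallVol d) ^ ((1 : ℝ) / d)⌉ : ℤ)

/-- The embedding of `ℤ^d` into `ℝ^d`. -/
def embedZ (d : ℕ) (i : Fin d → ℤ) : EuclideanSpace ℝ (Fin d) :=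
  WithLp.toLp 2 (fun l => (i l : ℝ))

/-- `A(K_j^m)`: the union of `K_j^m` with its `3^d - 1` neighbouring level-`m`
cubes, i.e. the cubes `K_i^m` with `‖i - j‖_∞ ≤ 1`. -/
def nbhd (d : ℕ) (m : ℝ) (j : Fin d → ℤ) : Set (EuclideanSpace ℝ (Fin d)) :=
  ⋃ i ∈ {i : Fin d → ℤ | ‖i - j‖ ≤ 1}, cube d m i

/-- The radius `R_i(ζ) = inf {r > 0 : Σ_{j : ρ(K_j^1,K_i^1) ≤ β_d r} ζ(j) ≤ π_d r^d}`
if `ζ i > 0` (with `inf ∅ = +∞`, so the value is taken in `ℝ≥0∞`), and `R_i(ζ) = 0`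
if `ζ i = 0`. -/
def Rad (d : ℕ) (ζ : (Fin d → ℤ) → ℕ) (i : Fin d → ℤ) : ℝ≥0∞ :=
  if ζ i = 0 then 0
  else sInf {t : ℝ≥0∞ | ∃ r : ℝ, 0 < r ∧ t = ENNReal.ofReal r ∧
    ((∑ᶠ j ∈ {j : Fin d → ℤ |
        rho d (cube d 1 j) (cube d 1 i) ≤ betaD d * r}, ζ j : ℕ) : ℝ)
      ≤ unitBallVol d * r ^ d}

/-- The sup norm `‖x‖_∞` on `ℝ^d`. -/
def supNorm (d : ℕ) (x : EuclideanSpace ℝ (Fin d)) : ℝ := ⨆ l, |x l|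

lemma cube_center_mem (d : ℕ) (i : Fin d → ℤ) :
    (WithLp.toLp 2 (fun l => ((i l : ℝ))) : EuclideanSpace ℝ (Fin d)) ∈ cube d 1 i := by
  intro l
  simp

lemma rho_self_nonpos (d : ℕ) (i : Fin d → ℤ) :
    rho d (cube d 1 i) (cube d 1 i) ≤ 0 := by
  apply csInf_le
  · exact ⟨0, by rintro b ⟨x, hx, y, hy, rfl⟩; exact dist_nonneg⟩
  · have h := Set.mem_image2_of_mem (cube_center_mem d i) (cube_center_mem d i)
      (f := fun x y => dist x y)
    simpa using h

lemma betaD_nonneg (d : ℕ) : (0:ℝ) ≤ betaD d := by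
  unfold betaD
  have h : (0:ℝ) ≤ 3 + 2 * Real.sqrt d * (unitBallVol d) ^ ((1:ℝ)/d) := by
    have h1 : (0:ℝ) ≤ unitBallVol d := ENNReal.toReal_nonneg
    positivity
  calc (0:ℝ) ≤ 3 + 2 * Real.sqrt d * (unitBallVol d) ^ ((1:ℝ)/d) := h
    _ ≤ _ := Int.le_ceil _

lemma unitBallVol_nonneg (d : ℕ) : (0:ℝ) ≤ unitBallVol d := ENNReal.toReal_nonneg

lemma rho_lower (d : ℕ) (i j : Fin d → ℤ) (l : Fin d) :
    |(j l : ℝ) - (i l : ℝ)| - 1 ≤ rho d (cube d 1 j) (cube d 1 i) := by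
  apply le_csInf
  · exact ⟨_, Set.mem_image2_of_mem (cube_center_mem d j) (cube_center_mem d i)⟩
  · rintro b ⟨x, hx, y, hy, rfl⟩
    have hxl : |x l - (j l : ℝ)| ≤ 1/2 := by simpa using hx l
    have hyl : |y l - (i l : ℝ)| ≤ 1/2 := by simpa using hy l
    have hdl : |x l - y l| ≤ dist x y := by
      rw [EuclideanSpace.dist_eq, ← Real.sqrt_sq_eq_abs]
      apply Real.sqrt_le_sqrt
      have h0 : (x l - y l) ^ 2 = dist (x l) (y l) ^ 2 := by
        rw [Real.dist_eq, sq_abs]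
      rw [h0]
      exact Finset.single_le_sum (f := fun m => dist (x m) (y m) ^ 2)
        (fun m _ => sq_nonneg _) (Finset.mem_univ l)
    have t1 : |(j l:ℝ) - (i l:ℝ)| ≤ |(j l:ℝ) - x l| + |x l - y l| + |y l - (i l:ℝ)| := by
      calc |(j l:ℝ) - (i l:ℝ)| ≤ |(j l:ℝ) - y l| + |y l - (i l:ℝ)| := abs_sub_le _ _ _
        _ ≤ (|(j l:ℝ) - x l| + |x l - y l|) + |y l - (i l:ℝ)| := by
            have := abs_sub_le (j l : ℝ) (x l) (y l)
            linarith
    rw [abs_sub_comm] at hxl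
    linarith

lemma tset_finite (d : ℕ) (i : Fin d → ℤ) (c : ℝ) :
    {j : Fin d → ℤ | rho d (cube d 1 j) (cube d 1 i) ≤ c}.Finite := by
  have hsub : {j : Fin d → ℤ | rho d (cube d 1 j) (cube d 1 i) ≤ c} ⊆
      Set.pi Set.univ (fun l => {k : ℤ | |(k:ℝ) - (i l : ℝ)| ≤ c + 1}) := by
    intro j hj l _
    have h := rho_lower d i j l
    simp only [Set.mem_setOf_eq] at hj ⊢
    linarith
  refine Set.Finite.subset (Set.Finite.pi (fun l => ?_)) hsub
  have h2 : {k : ℤ | |(k:ℝ) - (i l : ℝ)| ≤ c + 1} ⊆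
      Set.Icc (i l - ⌈c+1⌉) (i l + ⌈c+1⌉) := by
    intro k hk
    simp only [Set.mem_setOf_eq] at hk
    rw [abs_le] at hk
    have hc := Int.le_ceil (c+1)
    constructor
    · have : ((i l - ⌈c+1⌉ : ℤ) : ℝ) ≤ (k:ℝ) := by push_cast; linarith
      exact_mod_cast this
    · have : (k:ℝ) ≤ ((i l + ⌈c+1⌉ : ℤ):ℝ) := by push_cast; linarith
      exact_mod_cast this
  exact (Set.finite_Icc _ _).subset h2

lemma sum_mono (d : ℕ) (i : Fin d → ℤ) (ζ : (Fin d → ℤ) → ℕ) {c c' : ℝ} (h : c ≤ c') :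
    (∑ᶠ j ∈ {j : Fin d → ℤ | rho d (cube d 1 j) (cube d 1 i) ≤ c}, ζ j) ≤
    (∑ᶠ j ∈ {j : Fin d → ℤ | rho d (cube d 1 j) (cube d 1 i) ≤ c'}, ζ j) := by
  have h1 := tset_finite d i c
  have h2 := tset_finite d i c'
  rw [finsum_mem_eq_finite_toFinset_sum _ h1, finsum_mem_eq_finite_toFinset_sum _ h2]
  apply Finset.sum_le_sum_of_subset
  rw [Set.Finite.toFinset_subset_toFinset]
  exact fun j hj => le_trans hj h

lemma rad_le_iff (d : ℕ) (i : Fin d → ℤ) (a : ℝ) (ha : 0 < a)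
    (ζ : (Fin d → ℤ) → ℕ) :
    Rad d ζ i ≤ ENNReal.ofReal a ↔
      (ζ i = 0 ∨ ∃ r : ℝ, 0 < r ∧ r ≤ a ∧
        ((∑ᶠ j ∈ {j : Fin d → ℤ |
            rho d (cube d 1 j) (cube d 1 i) ≤ betaD d * r}, ζ j : ℕ) : ℝ)
          ≤ unitBallVol d * r ^ d) := by
  by_cases hζ : ζ i = 0
  · simp [Rad, hζ]
  rw [Rad, if_neg hζ]
  constructor
  · intro h
    by_contra hcon
    push_neg at hcon
    obtain ⟨-, hex⟩ := hcon
    have key : ∀ ε : ℝ, 0 < ε →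
        ((∑ᶠ j ∈ {j : Fin d → ℤ |
            rho d (cube d 1 j) (cube d 1 i) ≤ betaD d * a}, ζ j : ℕ) : ℝ)
          ≤ unitBallVol d * (a + ε) ^ d := by
      intro ε hε
      have hlt : sInf {t : ℝ≥0∞ | ∃ r : ℝ, 0 < r ∧ t = ENNReal.ofReal r ∧
          ((∑ᶠ j ∈ {j : Fin d → ℤ |
              rho d (cube d 1 j) (cube d 1 i) ≤ betaD d * r}, ζ j : ℕ) : ℝ)
            ≤ unitBallVol d * r ^ d} < ENNReal.ofReal (a + ε) := by
        refine lt_of_le_of_lt h ?_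
        rw [ENNReal.ofReal_lt_ofReal_iff (by linarith)]
        linarith
      obtain ⟨t, ⟨r, hr, rfl, hcond⟩, htlt⟩ := sInf_lt_iff.mp hlt
      have hra : r < a + ε := (ENNReal.ofReal_lt_ofReal_iff (by linarith)).mp htlt
      have har : a ≤ r := by
        by_contra hra'
        push_neg at hra'
        exact absurd hcond (not_le.mpr (hex r hr hra'.le))
      have hmono := sum_mono d i ζ
        (mul_le_mul_of_nonneg_left har (betaD_nonneg d))
      calc ((∑ᶠ j ∈ {j : Fin d → ℤ |
              rho d (cube d 1 j) (cube d 1 i) ≤ betaD d * a}, ζ j : ℕ) : ℝ)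
          ≤ ((∑ᶠ j ∈ {j : Fin d → ℤ |
              rho d (cube d 1 j) (cube d 1 i) ≤ betaD d * r}, ζ j : ℕ) : ℝ) := by
            exact_mod_cast hmono
        _ ≤ unitBallVol d * r ^ d := hcond
        _ ≤ unitBallVol d * (a + ε) ^ d := by
            apply mul_le_mul_of_nonneg_left
              (pow_le_pow_left₀ hr.le hra.le d) (unitBallVol_nonneg d)
    have final : ((∑ᶠ j ∈ {j : Fin d → ℤ |
        rho d (cube d 1 j) (cube d 1 i) ≤ betaD d * a}, ζ j : ℕ) : ℝ)
          ≤ unitBallVol d * a ^ d := by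
      have hc : Continuous (fun ε : ℝ => unitBallVol d * (a + ε) ^ d) := by
        continuity
      have hto : Filter.Tendsto (fun ε : ℝ => unitBallVol d * (a + ε) ^ d)
          (nhdsWithin 0 (Set.Ioi 0)) (nhds (unitBallVol d * a ^ d)) := by
        have h1 := hc.tendsto 0
        simp only [add_zero] at h1
        exact h1.mono_left nhdsWithin_le_nhds
      exact ge_of_tendsto hto
        (eventually_nhdsWithin_of_forall (fun ε hε => key ε hε))
    exact absurd final (not_le.mpr (hex a ha le_rfl))
  · rintro (h | ⟨r, hr, hra, hcond⟩)
    · exact absurd h hζ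
    · exact le_trans (sInf_le ⟨r, hr, rfl, hcond⟩) (ENNReal.ofReal_le_ofReal hra)

/-- Let `d ≥ 2`, `i ∈ ℤ^d` and `a > 0`. If `ζ, ζ' : ℤ^d → ℕ` agree
on every `j ∈ ℤ^d` with `ρ(K_j^1, K_i^1) ≤ β_d·a`, then `R_i(ζ) ≤ a` iff
`R_i(ζ') ≤ a`: the event `{R_i ≤ a}` is determined by the configuration inside
`B_i(β_d·a)`. -/
theorem statement5 (d : ℕ) (hd : 2 ≤ d) (i : Fin d → ℤ) (a : ℝ) (ha : 0 < a)
    (ζ ζ' : (Fin d → ℤ) → ℕ)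
    (hagree : ∀ j : Fin d → ℤ,
      rho d (cube d 1 j) (cube d 1 i) ≤ betaD d * a → ζ j = ζ' j) :
    Rad d ζ i ≤ ENNReal.ofReal a ↔ Rad d ζ' i ≤ ENNReal.ofReal a := by
  have hii : ζ i = ζ' i :=
    hagree i (le_trans (rho_self_nonpos d i)
      (mul_nonneg (betaD_nonneg d) ha.le))
  have hsum : ∀ r : ℝ, r ≤ a →
      (∑ᶠ j ∈ {j : Fin d → ℤ |
          rho d (cube d 1 j) (cube d 1 i) ≤ betaD d * r}, ζ j) =
      (∑ᶠ j ∈ {j : Fin d → ℤ |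
          rho d (cube d 1 j) (cube d 1 i) ≤ betaD d * r}, ζ' j) := by
    intro r hra
    refine finsum_mem_congr rfl (fun j hj => hagree j ?_)
    exact le_trans hj (mul_le_mul_of_nonneg_left hra (betaD_nonneg d))
  rw [rad_le_iff d i a ha ζ, rad_le_iff d i a ha ζ']
  constructor
  · rintro (h | ⟨r, hr, hra, hcond⟩)
    · exact Or.inl (hii ▸ h)
    · refine Or.inr ⟨r, hr, hra, ?_⟩
      rw [hsum r hra] at hcond
      exact hcond
  · rintro (h | ⟨r, hr, hra, hcond⟩)
    · exact Or.inl (hii ▸ h)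
    · refine Or.inr ⟨r, hr, hra, ?_⟩
      rw [hsum r hra]
      exact hcond
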